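/- If a finite loopless graph G (parallel edges allowed) can be edge-partitioned into two spanning subgraphs G1 and G2 such that G1 is Z3-connected and G2 is 2-edge-connected, then G belongs to the class S3; that is, for every Z3-boundary β of G there is a strongly connected orientation D of G such that the out-degree minus the in-degree of every vertex v under D is congruent to β(v) modulo 3. -/

import Mathlib

open scoped Classical

/-- A finite loopless multigraph: finite vertex and edge types, each edge has an
unordered pair of distinct endpoints (parallel edges allowed, loops forbidden). -/
structure Multigraph where
  V : Type
  E : Type
  fintypeV : Fintype V
  fintypeE : Fintype E
  ends : E → Sym2 V
  loopless : ∀ e, ¬ (ends e).IsDiag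

attribute [instance] Multigraph.fintypeV Multigraph.fintypeE

namespace Multigraph

/-- `D` is an orientation of `G`: each edge is assigned an ordered pair (tail, head)
compatible with its endpoints. -/
def IsOrientation (G : Multigraph) (D : G.E → G.V × G.V) : Prop :=
  ∀ e, G.ends e = s((D e).1, (D e).2)

/-- Out-degree of `v` under the orientation `D` (tail = first component). -/
noncomputable def outDeg (G : Multigraph) (D : G.E → G.V × G.V) (v : G.V) : ℕ :=
  {e : G.E | (D e).1 = v}.ncard

/-- In-degree of `v` under the orientation `D` (head = second component). -/
noncomputable def inDeg (G : Multigraph) (D : G.E → G.V × G.V) (v : G.V) : ℕ :=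
  {e : G.E | (D e).2 = v}.ncard

/-- Flow conservation: at every vertex the sum of `f` over outgoing arcs equals the sum
over incoming arcs. -/
def IsConserving (G : Multigraph) (D : G.E → G.V × G.V) (f : G.E → ℤ) : Prop :=
  ∀ v : G.V,
    (∑ e : G.E, if (D e).1 = v then f e else 0) =
      ∑ e : G.E, if (D e).2 = v then f e else 0

/-- `G` has a nowhere-zero 3-flow. -/
def HasNZ3Flow (G : Multigraph) : Prop :=
  ∃ (D : G.E → G.V × G.V) (f : G.E → ℤ),
    G.IsOrientation D ∧ (∀ e, 1 ≤ |f e| ∧ |f e| ≤ 2) ∧ G.IsConserving D f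

/-- `G` is `Z3`-connected: every `Z3`-boundary is realized by some orientation. -/
def Z3Connected (G : Multigraph) : Prop :=
  ∀ β : G.V → ZMod 3, (∑ v : G.V, β v) = 0 →
    ∃ D : G.E → G.V × G.V, G.IsOrientation D ∧
      ∀ v : G.V, ((G.outDeg D v : ZMod 3) - (G.inDeg D v : ZMod 3)) = β v

/-- Degree of a vertex: number of edges incident with it. -/
noncomputable def degree (G : Multigraph) (v : G.V) : ℕ :=
  {e : G.E | v ∈ G.ends e}.ncard

/-- `(S, F)` is a triangle-tree subgraph of `G`: start from a triangle and repeatedly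
add a new vertex joined to the two endpoints of an existing edge. -/
inductive IsTriangleTree (G : Multigraph) : Set G.V → Set G.E → Prop
  | base (x y z : G.V) (e1 e2 e3 : G.E)
      (hxy : x ≠ y) (hxz : x ≠ z) (hyz : y ≠ z)
      (h1 : G.ends e1 = s(x, y)) (h2 : G.ends e2 = s(y, z)) (h3 : G.ends e3 = s(x, z)) :
      IsTriangleTree G {x, y, z} {e1, e2, e3}
  | grow (S : Set G.V) (F : Set G.E) (hT : IsTriangleTree G S F)
      (v a b : G.V) (hv : v ∉ S) (e : G.E) (he : e ∈ F) (hab : G.ends e = s(a, b))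
      (e1 e2 : G.E) (h1 : G.ends e1 = s(v, a)) (h2 : G.ends e2 = s(v, b)) :
      IsTriangleTree G (insert v S) (insert e1 (insert e2 F))

/-- `G` contains a spanning triangle-tree. -/
def HasSpanningTriangleTree (G : Multigraph) : Prop :=
  ∃ F : Set G.E, G.IsTriangleTree Set.univ F

/-- Degree of `v` inside the edge set `F`. -/
noncomputable def degIn (G : Multigraph) (F : Set G.E) (v : G.V) : ℕ :=
  {e : G.E | e ∈ F ∧ v ∈ G.ends e}.ncard

/-- `(S, F)` is a triangle-path subgraph: a triangle-tree which is either a single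
triangle or has exactly two leaves (vertices of degree 2). -/
def IsTrianglePath (G : Multigraph) (S : Set G.V) (F : Set G.E) : Prop :=
  G.IsTriangleTree S F ∧ (S.ncard = 3 ∨ {v ∈ S | G.degIn F v = 2}.ncard = 2)

/-- `(S, F)` is a subgraph of `G`: endpoints of every chosen edge are chosen vertices. -/
def Subgraph (G : Multigraph) (S : Set G.V) (F : Set G.E) : Prop :=
  ∀ e ∈ F, ∀ v, v ∈ G.ends e → v ∈ S

/-- `G` is isomorphic to the complete (simple) graph on `n` vertices. -/
def IsCompleteGraphOn (G : Multigraph) (n : ℕ) : Prop :=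
  ∃ (φ : G.V ≃ Fin n) (ψ : G.E ≃ {p : Sym2 (Fin n) // ¬ p.IsDiag}),
    ∀ e, Sym2.map (⇑φ) (G.ends e) = (ψ e).1

def IsK3 (G : Multigraph) : Prop := G.IsCompleteGraphOn 3

def IsK4 (G : Multigraph) : Prop := G.IsCompleteGraphOn 4

/-- `G` is a bull-growing of `H` (equivalently, `H` is the bull-reduction of `G`):
`u, v` are adjacent vertices of degree 3 in `G` with common neighbour `w`, the remaining
neighbours of `u`, `v` are `a`, `b`, and `H = G - u - v + ab` (with a loop deleted when
`a = b`). -/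
def IsBullGrowing (G H : Multigraph) : Prop :=
  ∃ (u v w a b : G.V) (euv euw evw eua evb : G.E),
    G.ends euv = s(u, v) ∧ G.ends euw = s(u, w) ∧ G.ends evw = s(v, w) ∧
    G.ends eua = s(u, a) ∧ G.ends evb = s(v, b) ∧
    a ≠ v ∧ b ≠ u ∧
    euv ≠ euw ∧ euv ≠ eua ∧ euw ≠ eua ∧
    euv ≠ evw ∧ euv ≠ evb ∧ evw ≠ evb ∧
    {e : G.E | u ∈ G.ends e} = {euv, euw, eua} ∧
    {e : G.E | v ∈ G.ends e} = {euv, evw, evb} ∧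
    ∃ φ : H.V → G.V, Function.Injective φ ∧
      Set.range φ = {x : G.V | x ≠ u ∧ x ≠ v} ∧
      ((a = b → ∃ ψ : H.E → G.E, Function.Injective ψ ∧
          Set.range ψ = {e : G.E | e ∉ ({euv, euw, evw, eua, evb} : Set G.E)} ∧
          ∀ e, G.ends (ψ e) = Sym2.map φ (H.ends e)) ∧
       (a ≠ b → ∃ (e0 : H.E) (ψ : H.E → G.E),
          Sym2.map φ (H.ends e0) = s(a, b) ∧
          Set.InjOn ψ {e : H.E | e ≠ e0} ∧
          ψ '' {e : H.E | e ≠ e0} = {e : G.E | e ∉ ({euv, euw, evw, eua, evb} : Set G.E)} ∧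
          ∀ e, e ≠ e0 → G.ends (ψ e) = Sym2.map φ (H.ends e)))

/-- `(S, F)` is a triangle (a `K3` subgraph) of `G`. -/
def IsTriangleSub (G : Multigraph) (S : Set G.V) (F : Set G.E) : Prop :=
  ∃ (x y z : G.V) (e1 e2 e3 : G.E),
    x ≠ y ∧ x ≠ z ∧ y ≠ z ∧
    G.ends e1 = s(x, y) ∧ G.ends e2 = s(y, z) ∧ G.ends e3 = s(x, z) ∧
    S = {x, y, z} ∧ F = {e1, e2, e3}

/-- The subgraph `(S, F)` of `G` is `Z3`-connected (as a graph in its own right). -/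
def SubZ3Connected (G : Multigraph) (S : Set G.V) (F : Set G.E) : Prop :=
  ∀ β : G.V → ZMod 3, (∀ v, v ∉ S → β v = 0) → (∑ v : G.V, β v) = 0 →
    ∃ D : G.E → G.V × G.V, G.IsOrientation D ∧
      ∀ v ∈ S, (({e : G.E | e ∈ F ∧ (D e).1 = v}.ncard : ZMod 3)
        - ({e : G.E | e ∈ F ∧ (D e).2 = v}.ncard : ZMod 3)) = β v

/-- `G` is the 2-sum of its subgraphs `(SA, FA)` and `(SB, FB)`:
`E(G) = E(A) ∪ E(B)`, `|E(A) ∩ E(B)| = 1` and `|V(A) ∩ V(B)| = 2`. -/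
def IsTwoSum (G : Multigraph) (SA : Set G.V) (FA : Set G.E)
    (SB : Set G.V) (FB : Set G.E) : Prop :=
  G.Subgraph SA FA ∧ G.Subgraph SB FB ∧
  FA ∪ FB = Set.univ ∧ (FA ∩ FB).ncard = 1 ∧ (SA ∩ SB).ncard = 2

/-- All vertices of `G` are joined by walks using only edges from `F`. -/
def ConnOn (G : Multigraph) (F : Set G.E) : Prop :=
  ∀ u v : G.V, Relation.ReflTransGen (fun x y => ∃ e ∈ F, G.ends e = s(x, y)) u v

/-- The spanning subgraph with edge set `F` is 2-edge-connected:
connected and with no cut edge. -/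
def TwoEdgeConnOn (G : Multigraph) (F : Set G.E) : Prop :=
  G.ConnOn F ∧ ∀ e ∈ F, G.ConnOn (F \ {e})

/-- The orientation `D` is strongly connected. -/
def StronglyConnected (G : Multigraph) (D : G.E → G.V × G.V) : Prop :=
  ∀ u v : G.V, Relation.ReflTransGen (fun x y => ∃ e : G.E, D e = (x, y)) u v

/-- `G` belongs to the class `S3`: every `Z3`-boundary is realized by a strongly
connected orientation. -/
def InS3 (G : Multigraph) : Prop :=
  ∀ β : G.V → ZMod 3, (∑ v : G.V, β v) = 0 →
    ∃ D : G.E → G.V × G.V, G.IsOrientation D ∧ G.StronglyConnected D ∧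
      ∀ v : G.V, ((G.outDeg D v : ZMod 3) - (G.inDeg D v : ZMod 3)) = β v

/-- `G` has a cycle (of length ≥ 2, so possibly a pair of parallel edges) all of whose
edges lie in `A`. -/
def HasCycleIn (G : Multigraph) (A : Set G.E) : Prop :=
  ∃ (vs : List G.V) (es : List G.E),
    2 ≤ vs.length ∧ vs.Nodup ∧ es.Nodup ∧ es.length = vs.length ∧
    (∀ e ∈ es, e ∈ A) ∧
    ∀ (i : ℕ) (h1 : i < es.length) (h2 : i < vs.length)
      (h3 : (i + 1) % vs.length < vs.length),
      G.ends (es.get ⟨i, h1⟩) = s(vs.get ⟨i, h2⟩, vs.get ⟨(i + 1) % vs.length, h3⟩)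

/-- `(vs, es)` is a path from `u` to `v` in `G`. -/
def IsPath (G : Multigraph) (u v : G.V) (vs : List G.V) (es : List G.E) : Prop :=
  vs.Nodup ∧ es.Nodup ∧ vs.head? = some u ∧ vs.getLast? = some v ∧
  vs.length = es.length + 1 ∧
  ∀ (i : ℕ) (h1 : i < es.length) (h2 : i < vs.length) (h3 : i + 1 < vs.length),
    G.ends (es.get ⟨i, h1⟩) = s(vs.get ⟨i, h2⟩, vs.get ⟨i + 1, h3⟩)

/-- `H` is isomorphic to the subgraph `(S, F)` of `G`. -/
def IsIsoToSub (H G : Multigraph) (S : Set G.V) (F : Set G.E) : Prop :=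
  ∃ (φ : H.V → G.V) (ψ : H.E → G.E),
    Function.Injective φ ∧ Set.range φ = S ∧
    Function.Injective ψ ∧ Set.range ψ = F ∧
    ∀ e, G.ends (ψ e) = Sym2.map φ (H.ends e)

/-- `G'` is (isomorphic to) the graph obtained from `G` by adding two new edges with
endpoint pairs `p` and `q`. -/
def IsAddTwoEdges (G : Multigraph) (p q : Sym2 G.V) (G' : Multigraph) : Prop :=
  ∃ (φ : G.V ≃ G'.V) (e1 e2 : G'.E), e1 ≠ e2 ∧
    G'.ends e1 = Sym2.map (⇑φ) p ∧ G'.ends e2 = Sym2.map (⇑φ) q ∧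
    ∃ ψ : G.E → G'.E, Function.Injective ψ ∧
      Set.range ψ = {e : G'.E | e ≠ e1 ∧ e ≠ e2} ∧
      ∀ e, G'.ends (ψ e) = Sym2.map (⇑φ) (G.ends e)

/-- `G'` is (isomorphic to) the graph obtained from `G` by deleting the edges in `X`
and adding one new edge with endpoint pair `p`. -/
def IsDeleteAddEdge (G : Multigraph) (X : Set G.E) (p : Sym2 G.V) (G' : Multigraph) : Prop :=
  ∃ (φ : G.V ≃ G'.V) (e0 : G'.E),
    G'.ends e0 = Sym2.map (⇑φ) p ∧
    ∃ ψ : {e : G.E // e ∉ X} → G'.E, Function.Injective ψ ∧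
      Set.range ψ = {e : G'.E | e ≠ e0} ∧
      ∀ e : {e : G.E // e ∉ X}, G'.ends (ψ e) = Sym2.map (⇑φ) (G.ends e.1)

/-- `G` is a crystal: a spanning triangle-path plus one extra edge joining its two
leaves. -/
def IsCrystal (G : Multigraph) : Prop :=
  ∃ (F : Set G.E) (u v : G.V) (e0 : G.E),
    G.IsTrianglePath Set.univ F ∧ u ≠ v ∧
    G.degIn F u = 2 ∧ G.degIn F v = 2 ∧
    e0 ∉ F ∧ G.ends e0 = s(u, v) ∧ insert e0 F = Set.univ

/-- The subgraph with edge set `F` is triangularly connected: any two of its edges lie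
on a common triangle-path inside it. -/
def TriangularlyConnectedOn (G : Multigraph) (F : Set G.E) : Prop :=
  ∀ e1 ∈ F, ∀ e2 ∈ F, ∃ (S : Set G.V) (F' : Set G.E),
    F' ⊆ F ∧ G.IsTrianglePath S F' ∧ e1 ∈ F' ∧ e2 ∈ F'

/-- `G` is triangularly connected. -/
def TriangularlyConnected (G : Multigraph) : Prop :=
  G.TriangularlyConnectedOn Set.univ

/-- `G` contains a spanning triangularly-connected subgraph. -/
def HasSpanningTriangularlyConnected (G : Multigraph) : Prop :=
  ∃ F : Set G.E, G.TriangularlyConnectedOn F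

/-- `G` admits a circular `t/s`-flow. -/
def HasCircularFlow (G : Multigraph) (t s : ℤ) : Prop :=
  ∃ (D : G.E → G.V × G.V) (f : G.E → ℤ),
    G.IsOrientation D ∧ (∀ e, s ≤ |f e| ∧ |f e| ≤ t - s) ∧ G.IsConserving D f

end Multigraph

/-- `G` can be obtained from `K4` by a (possibly empty) series of bull-growing
operations. -/
inductive FromK4ByBull : Multigraph → Prop
  | base (G : Multigraph) : G.IsK4 → FromK4ByBull G
  | grow (G H : Multigraph) : FromK4ByBull H → G.IsBullGrowing H → FromK4ByBull G

section DedupChain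

variable {α : Type*} {R : α → α → Prop}

lemma chain_dedup :
    ∀ (l : List α) (v : α), List.Chain R v l →
      ∃ l', List.Chain R v l' ∧ (v :: l').Nodup ∧
        (v :: l').getLast? = (v :: l).getLast? ∧ ∀ x ∈ l', x ∈ l := by
  intro l
  induction l with
  | nil => intro v _; exact ⟨[], List.Chain.nil, List.nodup_singleton v, rfl, by simp⟩
  | cons x t ih =>
    intro v hc
    simp only [List.Chain, List.isChain_cons_cons] at hc
    obtain ⟨hvx, hxt⟩ := hc
    obtain ⟨l₂, hc₂, hnd₂, hlast₂, hsub₂⟩ := ih x hxt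
    by_cases hv : v ∈ x :: l₂
    · obtain ⟨s, q, hsq⟩ := List.append_of_mem hv
      have hcvq : List.Chain R v q := by
        cases s with
        | nil =>
          simp only [List.nil_append, List.cons.injEq] at hsq
          exact hsq.1 ▸ hsq.2 ▸ hc₂
        | cons y s' =>
          simp only [List.cons_append, List.cons.injEq] at hsq
          have : List.Chain R x (s' ++ v :: q) := hsq.2 ▸ hc₂
          exact (List.isChain_split (l₁ := x :: s').mp this).2
      have hsuf : (v :: q).Sublist (x :: l₂) := by
        rw [hsq]; exact List.sublist_append_right s (v :: q)
      refine ⟨q, hcvq, hnd₂.sublist hsuf, ?_, ?_⟩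
      · have h1 : (v :: q).getLast? = (x :: l₂).getLast? := by
          rw [hsq]; exact (List.getLast?_append_of_ne_nil s (List.cons_ne_nil _ _)).symm
        rw [h1, hlast₂]
        simp [List.getLast?_cons_cons]
      · intro z hz
        have : z ∈ x :: l₂ := hsuf.mem (List.mem_cons_of_mem v hz)
        rcases List.mem_cons.mp this with rfl | h
        · exact List.mem_cons_self
        · exact List.mem_cons_of_mem x (hsub₂ z h)
    · refine ⟨x :: l₂, List.chain_cons.mpr ⟨hvx, hc₂⟩, List.nodup_cons.mpr ⟨hv, hnd₂⟩, ?_, ?_⟩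
      · rw [List.getLast?_cons_cons, hlast₂, List.getLast?_cons_cons]
      · intro z hz
        rcases List.mem_cons.mp hz with rfl | h
        · exact List.mem_cons_self
        · exact List.mem_cons_of_mem x (hsub₂ z h)

end DedupChain
lemma sym2_exists_rep {α : Type*} (z : Sym2 α) : ∃ x y, z = s(x, y) := by
  induction z using Sym2.ind with
  | _ x y => exact ⟨x, y, rfl⟩

namespace Multigraph

variable (G : Multigraph)

/-- Auxiliary: directed step relation along oriented edges in `O`. -/
def RStep (d : G.E → G.V × G.V) (O : Set G.E) : G.V → G.V → Prop :=
  fun x y => ∃ f ∈ O, d f = (x, y)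

/-- Auxiliary invariant for the ear-absorption induction. -/
def RInv (F2 : Set G.E) (W : Set G.V) (O : Set G.E) (d : G.E → G.V × G.V) : Prop :=
  O ⊆ F2 ∧
  (∀ f ∈ O, G.ends f = s((d f).1, (d f).2) ∧ (d f).1 ∈ W ∧ (d f).2 ∈ W) ∧
  (∀ p ∈ W, ∀ q ∈ W, Relation.ReflTransGen (G.RStep d O) p q)

lemma ear (F2 : Set G.E) (W : Set G.V) (O : Set G.E) (d : G.E → G.V × G.V) (e : G.E)
    (hinv : G.RInv F2 W O d) (heO : e ∉ O) :
    ∀ (l : List G.V) (v : G.V),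
      List.Chain (fun x y => ∃ f ∈ F2 \ {e}, G.ends f = s(x, y)) v l →
      (v :: l).Nodup →
      (v :: l).getLast (List.cons_ne_nil _ _) ∈ W →
      ∃ W' O' d', W ⊆ W' ∧ v ∈ W' ∧ O ⊆ O' ∧ O' ⊆ F2 ∧ e ∉ O' ∧
        (∀ f ∈ O', G.ends f = s((d' f).1, (d' f).2) ∧ (d' f).1 ∈ W' ∧ (d' f).2 ∈ W') ∧
        (∀ f ∈ O, d' f = d f) ∧
        (∀ p ∈ W', ∀ q ∈ W, Relation.ReflTransGen (G.RStep d' O') p q) ∧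
        (∀ p ∈ W', Relation.ReflTransGen (G.RStep d' O') v p) ∧
        W' ⊆ W ∪ {y | y ∈ v :: l} := by
  obtain ⟨hOF, hends, hstrong⟩ := hinv
  intro l
  induction l with
  | nil =>
    intro v _ _ hlast
    simp only [List.getLast_singleton] at hlast
    exact ⟨W, O, d, subset_rfl, hlast, subset_rfl, hOF, heO, hends, fun f _ => rfl,
      hstrong, fun p hp => hstrong v hlast p hp, fun y hy => Or.inl hy⟩
  | cons x t ih =>
    intro v hchain hnd hlast
    simp only [List.Chain, List.isChain_cons_cons] at hchain
    obtain ⟨⟨f, hfmem, hfends⟩, hchain'⟩ := hchain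
    have hfF : f ∈ F2 := hfmem.1
    have hfe : f ≠ e := fun h => hfmem.2 (by simp [h])
    have hnd' : (x :: t).Nodup := hnd.of_cons
    have hvnot : v ∉ x :: t := (List.nodup_cons.mp hnd).1
    have hlast' : (x :: t).getLast (List.cons_ne_nil _ _) ∈ W := by
      rwa [List.getLast_cons (List.cons_ne_nil _ _)] at hlast
    by_cases hvW : v ∈ W
    · exact ⟨W, O, d, subset_rfl, hvW, subset_rfl, hOF, heO, hends, fun g _ => rfl,
        hstrong, fun p hp => hstrong v hvW p hp, fun y hy => Or.inl hy⟩
    · obtain ⟨W', O', d', hWW', hxW', hOO', hO'F, heO', hends', hdd', hstr', hreach', hWsub⟩ :=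
        ih x hchain' hnd' hlast'
      have hvW' : v ∉ W' := fun hv => by
        rcases hWsub hv with h | h
        · exact hvW h
        · exact hvnot h
      have hfO' : f ∉ O' := by
        intro hf
        obtain ⟨hfe2, h1W, h2W⟩ := hends' f hf
        rw [hfends] at hfe2
        rcases Sym2.eq_iff.mp hfe2 with ⟨h, -⟩ | ⟨h, -⟩
        · exact hvW' (by rw [h]; exact h1W)
        · exact hvW' (by rw [h]; exact h2W)
      have hmono : ∀ a b, G.RStep d' O' a b →
          G.RStep (Function.update d' f (v, x)) (insert f O') a b := by
        rintro a b ⟨g, hg, hgd⟩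
        exact ⟨g, Set.mem_insert_of_mem _ hg, by
          rw [Function.update_of_ne (ne_of_mem_of_not_mem hg hfO')]; exact hgd⟩
      have hstepvx : G.RStep (Function.update d' f (v, x)) (insert f O') v x :=
        ⟨f, Set.mem_insert _ _, Function.update_self _ _ _⟩
      refine ⟨insert v W', insert f O', Function.update d' f (v, x),
        fun y hy => Set.mem_insert_of_mem _ (hWW' hy),
        Set.mem_insert _ _,
        fun g hg => Set.mem_insert_of_mem _ (hOO' hg),
        Set.insert_subset_iff.mpr ⟨hfF, hO'F⟩,
        ?_, ?_, ?_, ?_, ?_, ?_⟩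
      · intro he'
        rcases Set.mem_insert_iff.mp he' with h | h
        · exact hfe h.symm
        · exact heO' h
      · intro g hg
        rcases Set.mem_insert_iff.mp hg with rfl | hg'
        · rw [Function.update_self]
          exact ⟨hfends, Set.mem_insert _ _, Set.mem_insert_of_mem _ hxW'⟩
        · rw [Function.update_of_ne (ne_of_mem_of_not_mem hg' hfO')]
          obtain ⟨h1, h2, h3⟩ := hends' g hg'
          exact ⟨h1, Set.mem_insert_of_mem _ h2, Set.mem_insert_of_mem _ h3⟩
      · intro g hg
        rw [Function.update_of_ne (ne_of_mem_of_not_mem (hOO' hg) hfO')]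
        exact hdd' g hg
      · intro p hp q hq
        rcases Set.mem_insert_iff.mp hp with rfl | hp'
        · exact Relation.ReflTransGen.head hstepvx (Relation.ReflTransGen.mono hmono _ _ (hstr' x hxW' q hq))
        · exact Relation.ReflTransGen.mono hmono _ _ (hstr' p hp' q hq)
      · intro p hp
        rcases Set.mem_insert_iff.mp hp with rfl | hp'
        · exact Relation.ReflTransGen.refl
        · exact Relation.ReflTransGen.head hstepvx (Relation.ReflTransGen.mono hmono _ _ (hreach' p hp'))
      · intro y hy
        rcases Set.mem_insert_iff.mp hy with rfl | hy'
        · exact Or.inr (List.mem_cons_self)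
        · rcases hWsub hy' with h | h
          · exact Or.inl h
          · exact Or.inr (List.mem_cons_of_mem v h)

lemma robbins_done (F2 : Set G.E) (W : Set G.V) (O : Set G.E) (d : G.E → G.V × G.V)
    (hconn : G.ConnOn F2) (hW : W.Nonempty)
    (hinv : G.RInv F2 W O d) (hsub : F2 ⊆ O) :
    ∃ d2 : G.E → G.V × G.V,
      (∀ e ∈ F2, G.ends e = s((d2 e).1, (d2 e).2)) ∧
      ∀ u v : G.V, Relation.ReflTransGen (G.RStep d2 F2) u v := by
  obtain ⟨hOF, hends, hstrong⟩ := hinv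
  have hOeq : O = F2 := le_antisymm hOF hsub
  subst hOeq
  obtain ⟨w0, hw0⟩ := hW
  have hall : ∀ q : G.V, q ∈ W := by
    intro q
    have h := hconn w0 q
    induction h with
    | refl => exact hw0
    | tail h1 hstep ih =>
      obtain ⟨f, hfO, hfends⟩ := hstep
      obtain ⟨hse, h1W, h2W⟩ := hends f hfO
      rw [hfends] at hse
      rcases Sym2.eq_iff.mp hse with ⟨-, h⟩ | ⟨-, h⟩
      · rw [h]; exact h2W
      · rw [h]; exact h1W
  exact ⟨d, fun e he => (hends e he).1, fun u v => hstrong u (hall u) v (hall v)⟩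

lemma robbins_aux (F2 : Set G.E) (h2 : G.TwoEdgeConnOn F2) :
    ∀ (n : ℕ) (W : Set G.V) (O : Set G.E) (d : G.E → G.V × G.V),
      (F2 \ O).ncard ≤ n → W.Nonempty → G.RInv F2 W O d →
      ∃ d2 : G.E → G.V × G.V,
        (∀ e ∈ F2, G.ends e = s((d2 e).1, (d2 e).2)) ∧
        ∀ u v : G.V, Relation.ReflTransGen (G.RStep d2 F2) u v := by
  obtain ⟨hconn, hbridge⟩ := h2
  intro n
  induction n with
  | zero =>
    intro W O d hle hW hinv
    refine G.robbins_done F2 W O d hconn hW hinv ?_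
    intro f hf
    by_contra hfO
    have h0 : (F2 \ O).ncard = 0 := Nat.le_zero.mp hle
    have hemp : F2 \ O = ∅ := (Set.ncard_eq_zero (Set.toFinite _)).mp h0
    exact Set.eq_empty_iff_forall_notMem.mp hemp f ⟨hf, hfO⟩
  | succ n ihn =>
    intro W O d hle hW hinv
    by_cases hsub : F2 ⊆ O
    · exact G.robbins_done F2 W O d hconn hW hinv hsub
    obtain ⟨hOF, hends, hstrong⟩ := hinv
    obtain ⟨w0, hw0⟩ := hW
    have hex : ∃ e, e ∈ F2 ∧ e ∉ O ∧ ∃ u v : G.V, G.ends e = s(u, v) ∧ u ∈ W := by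
      by_contra hno
      push_neg at hno
      have hall : ∀ q : G.V, q ∈ W := by
        intro q
        have h := hconn w0 q
        induction h with
        | refl => exact hw0
        | tail h1 hstep ih =>
          obtain ⟨f, hfF, hfends⟩ := hstep
          by_cases hfO : f ∈ O
          · obtain ⟨hse, h1W, h2W⟩ := hends f hfO
            rw [hfends] at hse
            rcases Sym2.eq_iff.mp hse with ⟨-, h⟩ | ⟨-, h⟩
            · rw [h]; exact h2W
            · rw [h]; exact h1W
          · exact absurd ih (hno f hfF hfO _ _ hfends)
      rw [Set.not_subset] at hsub
      obtain ⟨e0, he0F, he0O⟩ := hsub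
      obtain ⟨a, b, hab⟩ := sym2_exists_rep (G.ends e0)
      exact hno e0 he0F he0O a b hab (hall a)
    obtain ⟨e, heF, heO, u, v, hev, huW⟩ := hex
    have hrtg := hbridge e heF v u
    obtain ⟨l, hl, hlast⟩ := List.exists_isChain_cons_of_relationReflTransGen hrtg
    obtain ⟨l', hc', hnd', hlastq, hsubl⟩ := chain_dedup l v hl
    have hlast'W : (v :: l').getLast (List.cons_ne_nil _ _) ∈ W := by
      have h1 : (v :: l').getLast? = some u := by
        rw [hlastq, List.getLast?_eq_getLast (List.cons_ne_nil _ _), hlast]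
      rw [List.getLast?_eq_getLast (List.cons_ne_nil _ _)] at h1
      exact (Option.some_inj.mp h1) ▸ huW
    obtain ⟨W', O', d', hWW', hvW', hOO', hO'F, heO', hends', hdd', hstr', hreach', -⟩ :=
      G.ear F2 W O d e ⟨hOF, hends, hstrong⟩ heO l' v hc' hnd' hlast'W
    have hu'W' : u ∈ W' := hWW' huW
    have hmono : ∀ a b, G.RStep d' O' a b →
        G.RStep (Function.update d' e (u, v)) (insert e O') a b := by
      rintro a b ⟨g, hg, hgd⟩
      exact ⟨g, Set.mem_insert_of_mem _ hg, by
        rw [Function.update_of_ne (ne_of_mem_of_not_mem hg heO')]; exact hgd⟩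
    have hstepuv : G.RStep (Function.update d' e (u, v)) (insert e O') u v :=
      ⟨e, Set.mem_insert _ _, Function.update_self _ _ _⟩
    have hinv' : G.RInv F2 W' (insert e O') (Function.update d' e (u, v)) := by
      refine ⟨Set.insert_subset_iff.mpr ⟨heF, hO'F⟩, ?_, ?_⟩
      · intro g hg
        rcases Set.mem_insert_iff.mp hg with rfl | hg'
        · rw [Function.update_self]; exact ⟨hev, hu'W', hvW'⟩
        · rw [Function.update_of_ne (ne_of_mem_of_not_mem hg' heO')]
          obtain ⟨ha, hb, hc⟩ := hends' g hg'
          exact ⟨ha, hb, hc⟩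
      · intro p hp q hq
        exact (Relation.ReflTransGen.mono hmono _ _ (hstr' p hp u huW)).trans
          (Relation.ReflTransGen.head hstepuv (Relation.ReflTransGen.mono hmono _ _ (hreach' q hq)))
    have hlt : (F2 \ insert e O').ncard ≤ n := by
      have hss : F2 \ insert e O' ⊂ F2 \ O := by
        constructor
        · intro g hg
          exact ⟨hg.1, fun hgO => hg.2 (Set.mem_insert_of_mem _ (hOO' hgO))⟩
        · intro hcon
          exact (hcon ⟨heF, heO⟩).2 (Set.mem_insert _ _)
      have := Set.ncard_lt_ncard hss (Set.toFinite _)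
      omega
    exact ihn W' (insert e O') (Function.update d' e (u, v)) hlt ⟨u, hu'W'⟩ hinv'

lemma robbins_main (F2 : Set G.E) (h2 : G.TwoEdgeConnOn F2) :
    ∃ d2 : G.E → G.V × G.V,
      (∀ e ∈ F2, G.ends e = s((d2 e).1, (d2 e).2)) ∧
      ∀ u v : G.V, Relation.ReflTransGen (G.RStep d2 F2) u v := by
  by_cases hV : Nonempty G.V
  · obtain ⟨v0⟩ := hV
    refine G.robbins_aux F2 h2 ((F2 \ (∅ : Set G.E)).ncard) {v0} ∅ (fun _ => (v0, v0))
      le_rfl (Set.singleton_nonempty v0)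
      ⟨Set.empty_subset _, fun f hf => absurd hf (Set.notMem_empty f), ?_⟩
    intro p hp q hq
    rw [Set.mem_singleton_iff] at hp hq
    subst hp; subst hq
    exact Relation.ReflTransGen.refl
  · have hVempty : IsEmpty G.V := not_nonempty_iff.mp hV
    have hEempty : IsEmpty G.E := ⟨fun e => by
      obtain ⟨x, -, -⟩ := sym2_exists_rep (G.ends e)
      exact hVempty.false x⟩
    exact ⟨fun e => isEmptyElim e, fun e _ => isEmptyElim e, fun u => isEmptyElim u⟩

lemma fiber_sum (F : Set G.E) (g : G.E → G.V) :
    ∑ v : G.V, ({e : G.E | e ∈ F ∧ g e = v}).ncard = F.ncard := by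
  classical
  have key : F.toFinset.card = ∑ v : G.V, (F.toFinset.filter fun e => g e = v).card :=
    Finset.card_eq_sum_card_fiberwise (fun x _ => Finset.mem_univ (g x))
  rw [Set.ncard_eq_toFinset_card' F, key]
  refine Finset.sum_congr rfl fun v _ => ?_
  rw [Set.ncard_eq_toFinset_card']
  congr 1
  ext e
  simp [Set.mem_toFinset]

end Multigraph
/-- If `G` can be edge-partitioned into two spanning subgraphs `G1`
(Z3-connected) and `G2` (2-edge-connected), then `G ∈ S3`. -/
theorem stmt_14 (G : Multigraph) (F1 F2 : Set G.E)
    (hdisj : Disjoint F1 F2) (hunion : F1 ∪ F2 = Set.univ)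
    (h1 : G.SubZ3Connected Set.univ F1) (h2 : G.TwoEdgeConnOn F2) :
    G.InS3 := by
  intro β hβ
  obtain ⟨d2, hd2or, hd2str⟩ := G.robbins_main F2 h2
  set γ : G.V → ZMod 3 := fun v =>
    (({e : G.E | e ∈ F2 ∧ (d2 e).1 = v}.ncard : ZMod 3)
      - ({e : G.E | e ∈ F2 ∧ (d2 e).2 = v}.ncard : ZMod 3)) with hγ
  have hγsum : ∑ v : G.V, γ v = 0 := by
    simp only [hγ]
    rw [Finset.sum_sub_distrib, ← Nat.cast_sum, ← Nat.cast_sum,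
      G.fiber_sum F2 (fun e => (d2 e).1), G.fiber_sum F2 (fun e => (d2 e).2), sub_self]
  have hsum' : ∑ v : G.V, (β v - γ v) = 0 := by
    rw [Finset.sum_sub_distrib, hβ, hγsum, sub_zero]
  obtain ⟨D1, hD1or, hD1bd⟩ := h1 (fun v => β v - γ v)
    (fun v hv => absurd (Set.mem_univ v) hv) hsum'
  have hF1iff : ∀ e : G.E, e ∉ F2 → e ∈ F1 := by
    intro e h
    have hmem : e ∈ F1 ∪ F2 := hunion ▸ Set.mem_univ e
    rcases hmem with h1 | h1
    · exact h1
    · exact absurd h1 h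
  refine ⟨fun e => if e ∈ F2 then d2 e else D1 e, ?_, ?_, ?_⟩
  · intro e
    by_cases he : e ∈ F2
    · simp only [if_pos he]; exact hd2or e he
    · simp only [if_neg he]; exact hD1or e
  · intro u v
    refine Relation.ReflTransGen.mono ?_ _ _ (hd2str u v)
    rintro a b ⟨f, hf, hdf⟩
    exact ⟨f, by simp only [if_pos hf]; exact hdf⟩
  · intro v
    have hdisj1 : Disjoint {e : G.E | e ∈ F1 ∧ (D1 e).1 = v} {e : G.E | e ∈ F2 ∧ (d2 e).1 = v} :=
      Set.disjoint_left.mpr fun e he1 he2 => Set.disjoint_left.mp hdisj he1.1 he2.1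
    have hdisj2 : Disjoint {e : G.E | e ∈ F1 ∧ (D1 e).2 = v} {e : G.E | e ∈ F2 ∧ (d2 e).2 = v} :=
      Set.disjoint_left.mpr fun e he1 he2 => Set.disjoint_left.mp hdisj he1.1 he2.1
    have hsplit1 : {e : G.E | (if e ∈ F2 then d2 e else D1 e).1 = v}
        = {e : G.E | e ∈ F1 ∧ (D1 e).1 = v} ∪ {e : G.E | e ∈ F2 ∧ (d2 e).1 = v} := by
      ext e
      simp only [Set.mem_setOf_eq, Set.mem_union]
      constructor
      · intro hDe
        by_cases he : e ∈ F2
        · right; exact ⟨he, by simpa [he] using hDe⟩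
        · left; exact ⟨hF1iff e he, by simpa [he] using hDe⟩
      · rintro (⟨h1e, h2e⟩ | ⟨h1e, h2e⟩)
        · have hne : e ∉ F2 := fun hc => Set.disjoint_left.mp hdisj h1e hc
          simpa [hne] using h2e
        · simpa [h1e] using h2e
    have hsplit2 : {e : G.E | (if e ∈ F2 then d2 e else D1 e).2 = v}
        = {e : G.E | e ∈ F1 ∧ (D1 e).2 = v} ∪ {e : G.E | e ∈ F2 ∧ (d2 e).2 = v} := by
      ext e
      simp only [Set.mem_setOf_eq, Set.mem_union]
      constructor
      · intro hDe
        by_cases he : e ∈ F2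
        · right; exact ⟨he, by simpa [he] using hDe⟩
        · left; exact ⟨hF1iff e he, by simpa [he] using hDe⟩
      · rintro (⟨h1e, h2e⟩ | ⟨h1e, h2e⟩)
        · have hne : e ∉ F2 := fun hc => Set.disjoint_left.mp hdisj h1e hc
          simpa [hne] using h2e
        · simpa [h1e] using h2e
    have hout : G.outDeg (fun e => if e ∈ F2 then d2 e else D1 e) v
        = {e : G.E | e ∈ F1 ∧ (D1 e).1 = v}.ncard + {e : G.E | e ∈ F2 ∧ (d2 e).1 = v}.ncard := by
      show {e : G.E | (if e ∈ F2 then d2 e else D1 e).1 = v}.ncard = _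
      rw [hsplit1, Set.ncard_union_eq hdisj1 (Set.toFinite _) (Set.toFinite _)]
    have hin : G.inDeg (fun e => if e ∈ F2 then d2 e else D1 e) v
        = {e : G.E | e ∈ F1 ∧ (D1 e).2 = v}.ncard + {e : G.E | e ∈ F2 ∧ (d2 e).2 = v}.ncard := by
      show {e : G.E | (if e ∈ F2 then d2 e else D1 e).2 = v}.ncard = _
      rw [hsplit2, Set.ncard_union_eq hdisj2 (Set.toFinite _) (Set.toFinite _)]
    have hb := hD1bd v (Set.mem_univ v)
    have hγv : γ v = (({e : G.E | e ∈ F2 ∧ (d2 e).1 = v}.ncard : ZMod 3)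
        - ({e : G.E | e ∈ F2 ∧ (d2 e).2 = v}.ncard : ZMod 3)) := by simp only [hγ]
    rw [hout, hin, Nat.cast_add, Nat.cast_add]
    linear_combination hb - hγv
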